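/- For all integers 1 ≤ n ≤ M, the relaxed acceptance probability g_{M,n} is strictly increasing on [0,1]: if 0 ≤ q₁ < q₂ ≤ 1 then g_{M,n}(q₁) < g_{M,n}(q₂); consequently, if two candidate solutions satisfy P(x,a,b) > P(x',a,b), then the probability that the relaxed stochastic ruler method accepts x within M tests strictly exceeds the corresponding probability for x'. -/

import Mathlib

open Finset

/-- Relaxed acceptance probability
`g_{M,n}(q) = Σ_{t=n}^{M} C(t−1, t−n) · q^n · (1−q)^{t−n}`. -/
noncomputable def relaxedAccept (M n : ℕ) (q : ℝ) : ℝ :=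
  ∑ t ∈ Finset.Icc n M, ((t - 1).choose (t - n) : ℝ) * q ^ n * (1 - q) ^ (t - n)

lemma relaxedAccept_hasDerivAt (n M : ℕ) (hn : 1 ≤ n) (hnM : n ≤ M) (q : ℝ) :
    HasDerivAt (relaxedAccept M n)
      ((n : ℝ) * (M.choose n : ℝ) * q ^ (n - 1) * (1 - q) ^ (M - n)) q := by
  induction M, hnM using Nat.le_induction with
  | base =>
    have hfun : relaxedAccept n n = fun q : ℝ => q ^ n := by
      funext q
      simp [relaxedAccept]
    rw [hfun]
    simpa using hasDerivAt_pow n q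
  | succ M hM ih =>
    obtain ⟨m, rfl⟩ : ∃ m, n = m + 1 := ⟨n - 1, (Nat.succ_pred_eq_of_pos hn).symm⟩
    set e := M - (m + 1) with he
    have hM' : M = m + 1 + e := by omega
    have hsplit : relaxedAccept (M + 1) (m + 1)
        = fun q : ℝ => relaxedAccept M (m + 1) q
          + (M.choose (e + 1) : ℝ) * q ^ (m + 1) * (1 - q) ^ (e + 1) := by
      funext q
      have h1 : (m + 1 : ℕ) ≤ M + 1 := by omega
      rw [relaxedAccept, Finset.sum_Icc_succ_top h1]
      have h2 : M + 1 - 1 = M := by omega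
      have h3 : M + 1 - (m + 1) = e + 1 := by omega
      rw [h2, h3]
      rfl
    rw [hsplit]
    have hq : HasDerivAt (fun q : ℝ => q ^ (m + 1))
        (((m : ℝ) + 1) * q ^ m) q := by simpa using hasDerivAt_pow (m + 1) q
    have h1q : HasDerivAt (fun q : ℝ => (1 - q) ^ (e + 1))
        (((e : ℝ) + 1) * (1 - q) ^ e * (-1)) q := by
      have := ((hasDerivAt_id q).const_sub 1).fun_pow (e + 1)
      simpa using this
    have hterm : HasDerivAt
        (fun q : ℝ => (M.choose (e + 1) : ℝ) * (q ^ (m + 1) * (1 - q) ^ (e + 1)))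
        ((M.choose (e + 1) : ℝ) * ((((m : ℝ) + 1) * q ^ m) * (1 - q) ^ (e + 1)
          + q ^ (m + 1) * (((e : ℝ) + 1) * (1 - q) ^ e * (-1)))) q :=
      (hq.mul h1q).const_mul ((M.choose (e + 1) : ℝ))
    simp only [← mul_assoc] at hterm
    have hsum := ih.add hterm
    convert hsum using 1
    case e'_4 => rfl
    case e'_5 => rfl
    case e'_8 => rfl
    have h3 : M + 1 - (m + 1) = e + 1 := by omega
    rw [h3]
    have hsymm : M.choose (e + 1) = M.choose m := by
      have h5 : e + 1 = M - m := by omega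
      rw [h5, Nat.choose_symm (by omega : m ≤ M)]
    have hrec : (M.choose (m + 1) : ℝ) * ((m : ℝ) + 1)
        = (M.choose m : ℝ) * ((e : ℝ) + 1) := by
      have h := Nat.choose_succ_right_eq M m
      have h4 : M - m = e + 1 := by omega
      rw [h4] at h
      exact_mod_cast congrArg (fun x : ℕ => (x : ℝ)) h
    have hpas : ((M + 1).choose (m + 1) : ℝ)
        = (M.choose m : ℝ) + (M.choose (m + 1) : ℝ) := by
      exact_mod_cast congrArg (fun x : ℕ => (x : ℝ)) (Nat.choose_succ_succ' M m)
    rw [hsymm, hpas]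
    simp only [Nat.add_sub_cancel]
    push_cast
    linear_combination (-(q ^ m * (1 - q) ^ e * q)) * hrec

/-- For all integers `1 ≤ n ≤ M`, the relaxed acceptance probability `g_{M,n}` is
strictly increasing on `[0,1]`; consequently, if two candidate solutions have
per-test success probabilities `P(x,a,b) > P(x',a,b)` (both in `[0,1]`), then the
probability that the relaxed stochastic ruler method accepts `x` within `M` tests
strictly exceeds the corresponding probability for `x'`. -/
theorem relaxedAccept_strictMonoOn
    (n M : ℕ) (hn : 1 ≤ n) (hnM : n ≤ M) :
    (∀ q₁ q₂ : ℝ, 0 ≤ q₁ → q₁ < q₂ → q₂ ≤ 1 →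
      relaxedAccept M n q₁ < relaxedAccept M n q₂) ∧
    (∀ Px Px' : ℝ, 0 ≤ Px' → Px' < Px → Px ≤ 1 →
      relaxedAccept M n Px' < relaxedAccept M n Px) := by
  have hmono : StrictMonoOn (relaxedAccept M n) (Set.Icc (0 : ℝ) 1) := by
    apply strictMonoOn_of_deriv_pos (convex_Icc 0 1)
    · exact fun q _ => ((relaxedAccept_hasDerivAt n M hn hnM q).continuousAt).continuousWithinAt
    · intro q hq
      rw [interior_Icc] at hq
      rw [(relaxedAccept_hasDerivAt n M hn hnM q).deriv]
      have hc : 0 < (M.choose n : ℝ) := by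
        exact_mod_cast Nat.choose_pos hnM
      have h1 : (0 : ℝ) < q := hq.1
      have h2 : (0 : ℝ) < 1 - q := by linarith [hq.2]
      positivity
  constructor
  · intro q₁ q₂ h0 hlt h1
    exact hmono ⟨h0, le_of_lt (lt_of_lt_of_le hlt h1)⟩ ⟨le_trans h0 hlt.le, h1⟩ hlt
  · intro Px Px' h0 hlt h1
    exact hmono ⟨h0, le_of_lt (lt_of_lt_of_le hlt h1)⟩ ⟨le_trans h0 hlt.le, h1⟩ hlt
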